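/- Let k be an uncountable field and R = k[x,y]. Then the canonical ring homomorphism R → lim_{𝔞 ≠ 0} R/𝔞, into the inverse limit of R/𝔞 over all nonzero ideals 𝔞 of R, is bijective. -/

import Mathlib

open Polynomial

/-- Pigeonhole: an ℕ-valued function on an uncountable type has an infinite fiber. -/
lemma pigeon_nat {k : Type*} [Uncountable k] (g : k → ℕ) : ∃ d, {c | g c = d}.Infinite := by
  by_contra h
  push_neg at h
  have hU : (Set.univ : Set k) = ⋃ d : ℕ, {c | g c = d} := by
    ext c; simp
  have : (Set.univ : Set k).Countable := by
    rw [hU]; exact Set.countable_iUnion fun d => (h d).countable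
  exact Set.not_countable_univ this

/-- In a Noetherian domain, an element divisible by arbitrarily long products of
nonzero nonunits is zero. -/
lemma eq_zero_of_forall_prod_dvd {B : Type*} [CommRing B] [IsDomain B] [IsNoetherianRing B]
    (w : ℕ → B) (hw0 : ∀ i, w i ≠ 0) (hwu : ∀ i, ¬IsUnit (w i)) (ε : B)
    (hd : ∀ m, (∏ i ∈ Finset.range m, w i) ∣ ε) : ε = 0 := by
  by_contra hε
  choose t ht using hd
  have htne : ∀ m, t m ≠ 0 := by
    intro m h0
    exact hε (by rw [ht m, h0, mul_zero])
  have hstep : ∀ m, t m = w m * t (m + 1) := by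
    intro m
    have h1 : (∏ i ∈ Finset.range m, w i) * t m
        = (∏ i ∈ Finset.range m, w i) * (w m * t (m + 1)) := by
      rw [← ht m, ht (m + 1), Finset.prod_range_succ]; ring
    exact mul_left_cancel₀ (Finset.prod_ne_zero_iff.2 fun i _ => hw0 i) h1
  have hmono : Monotone fun m => Ideal.span {t m} := by
    apply monotone_nat_of_le_succ
    intro m
    exact Ideal.span_singleton_le_span_singleton.2 ⟨w m, by rw [hstep m]; ring⟩
  obtain ⟨n, hn⟩ := monotone_stabilizes_iff_noetherian.2 inferInstance ⟨_, hmono⟩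
  have heq : Ideal.span {t n} = Ideal.span {t (n + 1)} := hn (n + 1) (Nat.le_succ n)
  obtain ⟨u, hu⟩ := Ideal.span_singleton_eq_span_singleton.1 heq
  -- t n * u = t (n+1), t n = w n * t (n+1)
  have : t (n + 1) * 1 = t (n + 1) * ((u : B) * w n) := by
    have h2 : t n * u = t (n + 1) := hu
    calc t (n + 1) * 1 = t n * u := by rw [h2, mul_one]
    _ = (w n * t (n + 1)) * u := by rw [← hstep n]
    _ = t (n + 1) * (u * w n) := by ring
  have h3 : (1 : B) = u * w n := mul_left_cancel₀ (htne (n + 1)) this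
  exact hwu n (isUnit_of_mul_isUnit_right (h3 ▸ isUnit_one))

/-- UFD recombination: if every prime power dividing `f` divides `D`, then `f ∣ D`. -/
lemma dvd_of_forall_prime_pow_dvd {R : Type*} [CommRing R] [IsDomain R]
    [UniqueFactorizationMonoid R] (D : R) :
    ∀ f : R, f ≠ 0 → (∀ p n, Prime p → p ^ n ∣ f → p ^ n ∣ D) → f ∣ D := by
  intro f
  refine wellFounded_dvdNotUnit.induction
    (C := fun f : R => f ≠ 0 → (∀ p n, Prime p → p ^ n ∣ f → p ^ n ∣ D) → f ∣ D) f ?_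
  clear f
  intro f IH hf0 H
  by_cases hfu : IsUnit f
  · exact hfu.dvd
  obtain ⟨p, hpirr, hpf⟩ := WfDvdMonoid.exists_irreducible_factor hfu hf0
  have hp : Prime p := UniqueFactorizationMonoid.irreducible_iff_prime.1 hpirr
  obtain ⟨n, g, hpg, hfeq⟩ := WfDvdMonoid.max_power_factor hf0 hpirr
  have hn : n ≠ 0 := by
    rintro rfl
    rw [hfeq, pow_zero, one_mul] at hpf
    exact hpg hpf
  have hg0 : g ≠ 0 := by rintro rfl; rw [mul_zero] at hfeq; exact hf0 hfeq
  have hdnu : DvdNotUnit g f :=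
    ⟨hg0, p ^ n, fun h => hp.not_unit ((isUnit_pow_iff hn).1 h), by rw [hfeq]; ring⟩
  have hgD : g ∣ D := IH g hdnu hg0 fun q m hq hqg =>
    H q m hq (hqg.trans ⟨p ^ n, by rw [hfeq]; ring⟩)
  have hpD : p ^ n ∣ D := H p n hp (hfeq ▸ dvd_mul_right _ _)
  have hrel : IsRelPrime (p ^ n) g :=
    (hpirr.isRelPrime_iff_not_dvd.2 hpg).pow_left
  exact hfeq ▸ hrel.mul_dvd hpD hgD


noncomputable section CanonAux

variable (k : Type*) [Field k]

/-- The iso `k[x,y] ≃ (k[y])[x]` (variable `X 0` is the outer one). -/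
def eqX : MvPolynomial (Fin 2) k ≃ₐ[k] Polynomial (Polynomial k) :=
  (MvPolynomial.finSuccEquiv k 1).trans
    (Polynomial.mapAlgEquiv ((MvPolynomial.finSuccEquiv k 0).trans
      (Polynomial.mapAlgEquiv (MvPolynomial.isEmptyAlgEquiv k (Fin 0)))))

/-- The iso `k[x,y] ≃ (k[x])[y]` (variable `X 1` is the outer one). -/
def eqY : MvPolynomial (Fin 2) k ≃ₐ[k] Polynomial (Polynomial k) :=
  (MvPolynomial.renameEquiv k (Equiv.swap (0 : Fin 2) 1)).trans (eqX k)

@[simp] lemma eqX_X0 : eqX k (MvPolynomial.X 0) = X := by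
  simp [eqX, MvPolynomial.finSuccEquiv_X_zero]

@[simp] lemma eqX_X1 : eqX k (MvPolynomial.X 1) = C X := by
  have h1 : (MvPolynomial.X (1 : Fin 2) : MvPolynomial (Fin 2) k)
      = MvPolynomial.X (Fin.succ 0) := rfl
  rw [eqX]
  simp only [AlgEquiv.trans_apply, h1, MvPolynomial.finSuccEquiv_X_succ]
  simp [MvPolynomial.finSuccEquiv_X_zero]

@[simp] lemma eqX_C (a : k) : eqX k (MvPolynomial.C a) = C (C a) := by
  have : MvPolynomial.C a = algebraMap k (MvPolynomial (Fin 2) k) a := rfl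
  rw [this, AlgEquiv.commutes]
  simp [Polynomial.algebraMap_apply]

@[simp] lemma eqY_X0 : eqY k (MvPolynomial.X 0) = C X := by
  simp [eqY, MvPolynomial.renameEquiv_apply, Equiv.swap_apply_left]

@[simp] lemma eqY_X1 : eqY k (MvPolynomial.X 1) = X := by
  simp [eqY, MvPolynomial.renameEquiv_apply, Equiv.swap_apply_right]

@[simp] lemma eqY_C (a : k) : eqY k (MvPolynomial.C a) = C (C a) := by
  have : MvPolynomial.C a = algebraMap k (MvPolynomial (Fin 2) k) a := rfl
  rw [this, AlgEquiv.commutes]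
  simp [Polynomial.algebraMap_apply]

variable {k}

/-- Evaluation `x := c` : `k[x,y] → k[y]`. -/
def epsX (c : k) : MvPolynomial (Fin 2) k →+* Polynomial k :=
  (Polynomial.evalRingHom (C c)).comp (eqX k : MvPolynomial (Fin 2) k →+* Polynomial (Polynomial k))

/-- Evaluation `y := c'` : `k[x,y] → k[x]`. -/
def epsY (c' : k) : MvPolynomial (Fin 2) k →+* Polynomial k :=
  (Polynomial.evalRingHom (C c')).comp (eqY k : MvPolynomial (Fin 2) k →+* Polynomial (Polynomial k))

/-- Evaluation at the point `(c, c')`. -/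
def epsPt (c c' : k) : MvPolynomial (Fin 2) k →+* k :=
  (Polynomial.evalRingHom c').comp (epsX c)

@[simp] lemma epsX_X0 (c : k) : epsX c (MvPolynomial.X 0) = C c := by simp [epsX]
@[simp] lemma epsX_X1 (c : k) : epsX c (MvPolynomial.X 1) = X := by simp [epsX]
@[simp] lemma epsX_C (c : k) (a : k) : epsX c (MvPolynomial.C a) = C a := by simp [epsX]
@[simp] lemma epsY_X0 (c' : k) : epsY c' (MvPolynomial.X 0) = X := by simp [epsY]
@[simp] lemma epsY_X1 (c' : k) : epsY c' (MvPolynomial.X 1) = C c' := by simp [epsY]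
@[simp] lemma epsY_C (c' : k) (a : k) : epsY c' (MvPolynomial.C a) = C a := by simp [epsY]

/-- The line `x = c`. -/
def lineX (c : k) : MvPolynomial (Fin 2) k := MvPolynomial.X 0 - MvPolynomial.C c
/-- The line `y = c'`. -/
def lineY (c' : k) : MvPolynomial (Fin 2) k := MvPolynomial.X 1 - MvPolynomial.C c'

lemma eqX_lineX (c : k) : eqX k (lineX c) = X - C (C c) := by simp [lineX]
lemma eqY_lineY (c' : k) : eqY k (lineY c') = X - C (C c') := by simp [lineY]

lemma lineX_ne_zero (c : k) : lineX c ≠ 0 := by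
  intro h
  have := congrArg (eqX k) h
  rw [eqX_lineX, map_zero] at this
  exact X_sub_C_ne_zero (C c) this

lemma lineY_ne_zero (c' : k) : lineY c' ≠ 0 := by
  intro h
  have := congrArg (eqY k) h
  rw [eqY_lineY, map_zero] at this
  exact X_sub_C_ne_zero (C c') this

lemma epsX_eq_zero_iff (c : k) (h : MvPolynomial (Fin 2) k) :
    epsX c h = 0 ↔ lineX c ∣ h := by
  have : epsX c h = (eqX k h).eval (C c) := rfl
  rw [this, ← IsRoot.def, ← dvd_iff_isRoot, ← eqX_lineX]
  exact map_dvd_iff (eqX k).toRingEquiv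

lemma epsY_eq_zero_iff (c' : k) (h : MvPolynomial (Fin 2) k) :
    epsY c' h = 0 ↔ lineY c' ∣ h := by
  have : epsY c' h = (eqY k h).eval (C c') := rfl
  rw [this, ← IsRoot.def, ← dvd_iff_isRoot, ← eqY_lineY]
  exact map_dvd_iff (eqY k).toRingEquiv

lemma epsX_lineX (c : k) : epsX c (lineX c) = 0 := by simp [lineX]
lemma epsY_lineY (c' : k) : epsY c' (lineY c') = 0 := by simp [lineY]

/-- `εy c' = (coefficientwise eval at c') ∘ eqX`. -/
lemma epsY_eq_map_comp (c' : k) :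
    epsY c' = (Polynomial.mapRingHom (Polynomial.evalRingHom c')).comp
      (eqX k : MvPolynomial (Fin 2) k →+* Polynomial (Polynomial k)) := by
  apply MvPolynomial.ringHom_ext
  · intro a; simp
  · intro i
    fin_cases i <;> simp

/-- `εx c = (coefficientwise eval at c) ∘ eqY`. -/
lemma epsX_eq_map_comp (c : k) :
    epsX c = (Polynomial.mapRingHom (Polynomial.evalRingHom c)).comp
      (eqY k : MvPolynomial (Fin 2) k →+* Polynomial (Polynomial k)) := by
  apply MvPolynomial.ringHom_ext
  · intro a; simp
  · intro i
    fin_cases i <;> simp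

/-- Evaluation at a point, via `εy` first. -/
lemma epsPt_eq (c c' : k) :
    epsPt c c' = (Polynomial.evalRingHom c).comp (epsY c') := by
  apply MvPolynomial.ringHom_ext
  · intro a; simp [epsPt]
  · intro i
    fin_cases i <;> simp [epsPt]

/-- Commuting the two evaluations on `(k[y])[x]`. -/
lemma eval_map_comm (c c' : k) (ρ : Polynomial (Polynomial k)) :
    (ρ.map (Polynomial.evalRingHom c')).eval c = (ρ.eval (C c)).eval c' := by
  induction ρ using Polynomial.induction_on' with
  | add p q hp hq => simp [hp, hq]
  | monomial n a => simp [Polynomial.map_monomial, Polynomial.eval_monomial, mul_pow]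

end CanonAux


noncomputable section LagrangeAux

variable {k : Type*} [Field k]

/-- Lagrange basis polynomial in `(k[y])[x]` through the nodes `C (u j)`. -/
def lagBasis (u : ℕ → k) (M i : ℕ) : Polynomial (Polynomial k) :=
  ∏ j ∈ (Finset.range (M + 1)).erase i,
    (C (C ((u i - u j)⁻¹)) * (X - C (C (u j))))

/-- Lagrange interpolation polynomial in `(k[y])[x]` with values in `k[y]`. -/
def lagPoly (u : ℕ → k) (vals : ℕ → Polynomial k) (M : ℕ) : Polynomial (Polynomial k) :=
  ∑ i ∈ Finset.range (M + 1), C (vals i) * lagBasis u M i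

lemma natDegree_lagBasis_le (u : ℕ → k) (M i : ℕ) (hi : i ∈ Finset.range (M + 1)) :
    (lagBasis u M i).natDegree ≤ M := by
  refine le_trans (natDegree_prod_le _ _) ?_
  have h1 : ∀ j ∈ (Finset.range (M + 1)).erase i,
      (C (C ((u i - u j)⁻¹)) * (X - C (C (u j)))).natDegree ≤ 1 := by
    intro j _
    refine le_trans (natDegree_mul_le) ?_
    simp [natDegree_X_sub_C]
  refine le_trans (Finset.sum_le_sum h1) ?_
  rw [Finset.sum_const, smul_eq_mul, mul_one, Finset.card_erase_of_mem hi,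
    Finset.card_range]
  omega

lemma natDegree_lagPoly_le (u : ℕ → k) (vals : ℕ → Polynomial k) (M : ℕ) :
    (lagPoly u vals M).natDegree ≤ M := by
  refine natDegree_sum_le_of_forall_le _ _ fun i _ => ?_
  rename_i hi
  refine le_trans natDegree_mul_le ?_
  simpa using natDegree_lagBasis_le u M i hi

lemma lagBasis_eval_self (u : ℕ → k) (hu : Function.Injective u) (M i : ℕ) :
    (lagBasis u M i).eval (C (u i)) = 1 := by
  rw [lagBasis, eval_prod]
  rw [Finset.prod_eq_one]
  intro j hj
  have hji : j ≠ i := (Finset.mem_erase.1 hj).1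
  have : u i - u j ≠ 0 := sub_ne_zero.2 fun h => hji (hu h).symm
  simp only [eval_mul, eval_C, eval_sub, eval_X, ← C_sub, ← C_mul]
  rw [inv_mul_cancel₀ this, map_one]

lemma lagBasis_eval_other (u : ℕ → k) (M i t : ℕ) (ht : t ∈ Finset.range (M + 1))
    (hne : t ≠ i) (hut : u t ≠ u i) :
    (lagBasis u M i).eval (C (u t)) = 0 := by
  rw [lagBasis, eval_prod]
  refine Finset.prod_eq_zero (Finset.mem_erase.2 ⟨hne, ht⟩) ?_
  simp

lemma lagPoly_eval (u : ℕ → k) (hu : Function.Injective u) (vals : ℕ → Polynomial k)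
    (M t : ℕ) (ht : t ∈ Finset.range (M + 1)) :
    (lagPoly u vals M).eval (C (u t)) = vals t := by
  rw [lagPoly, eval_finset_sum]
  rw [Finset.sum_eq_single t]
  · simp [lagBasis_eval_self u hu M t]
  · intro i hi hit
    have : (lagBasis u M i).eval (C (u t)) = 0 :=
      lagBasis_eval_other u M i t ht hit.symm fun h => hit.symm (hu h)
    simp [this]
  · intro h; exact absurd ht h

end LagrangeAux

section PrimePow

variable {R : Type*} [CommRing R] [IsDomain R] [IsNoetherianRing R]


/-- Key inductive step: all powers of a prime `p` with a good supply of auxiliary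
lines divide `r - rep (p ^ n)`. -/
lemma prime_pow_dvd_of_supply
    (rep : R → R) (KC : ∀ f g : R, f ≠ 0 → g ≠ 0 → f ∣ g → f ∣ rep g - rep f)
    (r : R) (p : R) (hp : Prime p) (ℓ : ℕ → R)
    (hl0 : ∀ i, ℓ i ≠ 0)
    (hcop : ∀ i j, i ≠ j → IsCoprime (ℓ i) (ℓ j))
    (hlr : ∀ i, ℓ i ∣ r - rep (ℓ i))
    (hlp : ∀ i, Ideal.Quotient.mk (Ideal.span {p}) (ℓ i) ≠ 0)
    (hlu : ∀ i, ¬ IsUnit (Ideal.Quotient.mk (Ideal.span {p}) (ℓ i))) :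
    ∀ n, p ^ n ∣ r - rep (p ^ n) := by
  haveI hPrime : (Ideal.span {p}).IsPrime :=
    (Ideal.span_singleton_prime hp.ne_zero).2 hp
  haveI : IsNoetherianRing (R ⧸ Ideal.span {p}) :=
    isNoetherianRing_of_surjective R _ (Ideal.Quotient.mk (Ideal.span {p}))
      Ideal.Quotient.mk_surjective
  intro n
  induction n with
  | zero => simpa using one_dvd _
  | succ n IH =>
    set mkq := Ideal.Quotient.mk (Ideal.span {p}) with hmkq
    have hpn : (p : R) ^ n ≠ 0 := pow_ne_zero _ hp.ne_zero
    have hpn1 : (p : R) ^ (n + 1) ≠ 0 := pow_ne_zero _ hp.ne_zero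
    have hKC2 : p ^ n ∣ rep (p ^ (n + 1)) - rep (p ^ n) :=
      KC _ _ hpn hpn1 (pow_dvd_pow p n.le_succ)
    have hpnD : p ^ n ∣ r - rep (p ^ (n + 1)) := by
      have : r - rep (p ^ (n + 1))
          = (r - rep (p ^ n)) - (rep (p ^ (n + 1)) - rep (p ^ n)) := by ring
      rw [this]
      exact dvd_sub IH hKC2
    obtain ⟨F, hF⟩ := hpnD
    suffices hpF : p ∣ F by
      obtain ⟨G, hG⟩ := hpF
      exact ⟨G, by rw [hF, hG]; ring⟩
    have hmkF : mkq F = 0 := by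
      refine eq_zero_of_forall_prod_dvd (fun i => mkq (ℓ i)) hlp hlu _ fun m => ?_
      set W : R := ∏ i ∈ Finset.range m, ℓ i with hWdef
      have hW0 : W ≠ 0 := Finset.prod_ne_zero_iff.2 fun i _ => hl0 i
      have hs0 : p ^ (n + 1) * W ≠ 0 := mul_ne_zero hpn1 hW0
      set s : R := rep (p ^ (n + 1) * W) with hsdef
      have hA : p ^ (n + 1) ∣ s - rep (p ^ (n + 1)) :=
        KC _ _ hpn1 hs0 (dvd_mul_right _ _)
      have hBi : ∀ i ∈ Finset.range m, ℓ i ∣ s - r := by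
        intro i hi
        have h1 : ℓ i ∣ s - rep (ℓ i) :=
          KC _ _ (hl0 i) hs0 (dvd_mul_of_dvd_right (Finset.dvd_prod_of_mem _ hi) _)
        have : s - r = (s - rep (ℓ i)) - (r - rep (ℓ i)) := by ring
        rw [this]
        exact dvd_sub h1 (hlr i)
      have hW : W ∣ s - r := by
        refine Finset.prod_dvd_of_coprime ?_ hBi
        intro i hi j hj hij
        exact hcop i j hij
      obtain ⟨a, ha⟩ := hA
      obtain ⟨b, hb⟩ := hW
      have key : W * b = p ^ n * (p * a - F) := by
        have h1 : p ^ n * F = r - rep (p ^ (n + 1)) := hF.symm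
        have h2 : s - rep (p ^ (n + 1)) = p ^ (n + 1) * a := ha
        have h3 : s - r = W * b := hb
        have : p ^ n * F = -(W * b) + p ^ (n + 1) * a := by
          rw [h1, ← h3, ← h2]; ring
        linear_combination this
      have hpW : ¬ p ∣ W := by
        intro hdvd
        obtain ⟨i, hi, hpi⟩ := (hp.dvd_finset_prod_iff _).1 hdvd
        exact hlp i (Ideal.Quotient.eq_zero_iff_mem.2
          (Ideal.mem_span_singleton.2 hpi))
      have hpnb : p ^ n ∣ b := hp.pow_dvd_of_dvd_mul_left n hpW ⟨_, key⟩
      obtain ⟨b', hb'⟩ := hpnb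
      have hFeq : F = -(W * b') + p * a := by
        refine mul_left_cancel₀ hpn ?_
        rw [hb'] at key
        linear_combination key
      have : mkq F = (∏ i ∈ Finset.range m, mkq (ℓ i)) * (- mkq b') := by
        rw [hFeq]
        have hmp : mkq p = 0 :=
          Ideal.Quotient.eq_zero_iff_mem.2 (Ideal.mem_span_singleton.2 dvd_rfl)
        rw [map_add, map_neg, map_mul, map_mul, hmp, zero_mul, add_zero]
        rw [hWdef, map_prod]
        ring
      exact ⟨_, this⟩
    have : F - 0 ∈ Ideal.span {p} := by
      simpa using Ideal.Quotient.eq_zero_iff_mem.1 hmkF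
    simpa using Ideal.mem_span_singleton.1 (by simpa using this)
end PrimePow
section Coprime
variable {k : Type*} [Field k]
open Polynomial

lemma lineX_isCoprime {c c' : k} (h : c ≠ c') : IsCoprime (lineX c) (lineX c') := by
  have h1 : (c' - c) ≠ 0 := sub_ne_zero.2 (Ne.symm h)
  refine ⟨MvPolynomial.C ((c' - c)⁻¹), -MvPolynomial.C ((c' - c)⁻¹), ?_⟩
  have h2 : (MvPolynomial.C ((c' - c)⁻¹) : MvPolynomial (Fin 2) k) * lineX c +
      (-MvPolynomial.C ((c' - c)⁻¹)) * lineX c'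
      = MvPolynomial.C ((c' - c)⁻¹) * (MvPolynomial.C c' - MvPolynomial.C c) := by
    rw [lineX, lineX]; ring
  rw [h2, ← MvPolynomial.C_sub, ← MvPolynomial.C_mul, inv_mul_cancel₀ h1, MvPolynomial.C_1]

lemma lineY_isCoprime {c c' : k} (h : c ≠ c') : IsCoprime (lineY c) (lineY c') := by
  have h1 : (c' - c) ≠ 0 := sub_ne_zero.2 (Ne.symm h)
  refine ⟨MvPolynomial.C ((c' - c)⁻¹), -MvPolynomial.C ((c' - c)⁻¹), ?_⟩
  have h2 : (MvPolynomial.C ((c' - c)⁻¹) : MvPolynomial (Fin 2) k) * lineY c +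
      (-MvPolynomial.C ((c' - c)⁻¹)) * lineY c'
      = MvPolynomial.C ((c' - c)⁻¹) * (MvPolynomial.C c' - MvPolynomial.C c) := by
    rw [lineY, lineY]; ring
  rw [h2, ← MvPolynomial.C_sub, ← MvPolynomial.C_mul, inv_mul_cancel₀ h1, MvPolynomial.C_1]

end Coprime
/-- A family of elements of the quotients `R ⧸ 𝔞`, indexed by the nonzero ideals `𝔞`
of `R`, is compatible if it commutes with the natural quotient (transition) maps.
Such families are exactly the elements of the inverse limit `lim_{𝔞 ≠ 0} R ⧸ 𝔞`. -/
def IsCompatibleFamily {R : Type*} [CommRing R]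
    (x : ∀ a : {a : Ideal R // a ≠ ⊥}, R ⧸ a.1) : Prop :=
  ∀ (a b : {a : Ideal R // a ≠ ⊥}) (h : a.1 ≤ b.1),
    Ideal.Quotient.factor (S := a.1) (T := b.1) h (x a) = x b

/-- For `R = k[x,y]` with `k` an uncountable field, the canonical map
`R → lim_{𝔞 ≠ 0} R ⧸ 𝔞` is bijective: it is injective, and every compatible family
`(x_𝔞)_𝔞` comes from a (unique) element `r ∈ R`. -/
theorem canonical_map_bijective_of_uncountable
    (k : Type*) [Field k] [Uncountable k] :
    Function.Injective
        (fun (r : MvPolynomial (Fin 2) k)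
            (a : {a : Ideal (MvPolynomial (Fin 2) k) // a ≠ ⊥}) =>
          Ideal.Quotient.mk a.1 r) ∧
      ∀ x : ∀ a : {a : Ideal (MvPolynomial (Fin 2) k) // a ≠ ⊥},
            MvPolynomial (Fin 2) k ⧸ a.1,
        IsCompatibleFamily x →
          ∃ r : MvPolynomial (Fin 2) k, ∀ a, Ideal.Quotient.mk a.1 r = x a := by
  classical
  constructor
  · -- Injectivity
    intro r s h
    by_contra hne
    have ht : r - s ≠ 0 := sub_ne_zero.2 hne
    have key : ∀ (a : Ideal (MvPolynomial (Fin 2) k)), a ≠ ⊥ → r - s ∈ a := by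
      intro a ha
      have h2 := congrFun h ⟨a, ha⟩
      exact Ideal.Quotient.eq.1 h2
    by_cases hu : IsUnit (r - s)
    · have hX : (MvPolynomial.X 0 : MvPolynomial (Fin 2) k) ≠ 0 := by
        intro h0
        have := congrArg (eqX k) h0
        rw [eqX_X0, map_zero] at this
        exact Polynomial.X_ne_zero this
      have hmem := key (Ideal.span {MvPolynomial.X 0})
        (by rw [Ne, Ideal.span_singleton_eq_bot]; exact hX)
      have hdvd : (MvPolynomial.X 0 : MvPolynomial (Fin 2) k) ∣ r - s :=
        Ideal.mem_span_singleton.1 hmem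
      have hXu : IsUnit (MvPolynomial.X 0 : MvPolynomial (Fin 2) k) :=
        isUnit_of_dvd_unit hdvd hu
      have : IsUnit (Polynomial.X : Polynomial (Polynomial k)) := by
        have := hXu.map (eqX k)
        rwa [eqX_X0] at this
      exact Polynomial.not_isUnit_X this
    · have h2 : (r - s) ^ 2 ≠ 0 := pow_ne_zero _ ht
      have hmem := key (Ideal.span {(r - s) ^ 2})
        (by rw [Ne, Ideal.span_singleton_eq_bot]; exact h2)
      obtain ⟨t, htt⟩ := Ideal.mem_span_singleton.1 hmem
      have h3 : (r - s) * 1 = (r - s) * ((r - s) * t) := by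
        linear_combination htt
      have h4 : (1 : MvPolynomial (Fin 2) k) = (r - s) * t := mul_left_cancel₀ ht h3
      exact hu (IsUnit.of_mul_eq_one _ h4.symm)
  · -- Surjectivity
    intro x hx
    have hker : ∀ f : MvPolynomial (Fin 2) k, f ≠ 0 → Ideal.span {f} ≠ ⊥ := by
      intro f hf
      rw [Ne, Ideal.span_singleton_eq_bot]; exact hf
    choose rep0 hrep0 using fun (f : {f : MvPolynomial (Fin 2) k // f ≠ 0}) =>
      Ideal.Quotient.mk_surjective (I := Ideal.span {f.1})
        (x ⟨Ideal.span {f.1}, hker f.1 f.2⟩)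
    set rep : MvPolynomial (Fin 2) k → MvPolynomial (Fin 2) k :=
      fun f => if hf : f = 0 then 0 else rep0 ⟨f, hf⟩ with hrepdef
    have hrep : ∀ (f : MvPolynomial (Fin 2) k) (hf : f ≠ 0),
        Ideal.Quotient.mk (Ideal.span {f}) (rep f)
          = x ⟨Ideal.span {f}, hker f hf⟩ := by
      intro f hf
      rw [hrepdef]
      simp only [dif_neg hf]
      exact hrep0 ⟨f, hf⟩
    have KC : ∀ f g : MvPolynomial (Fin 2) k, f ≠ 0 → g ≠ 0 → f ∣ g →
        f ∣ rep g - rep f := by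
      intro f g hf hg hdvd
      have hle : Ideal.span {g} ≤ Ideal.span {f} :=
        Ideal.span_singleton_le_span_singleton.2 hdvd
      have h1 := hx ⟨Ideal.span {g}, hker g hg⟩ ⟨Ideal.span {f}, hker f hf⟩ hle
      rw [← hrep g hg, Ideal.Quotient.factor_mk, ← hrep f hf] at h1
      exact Ideal.mem_span_singleton.1 (Ideal.Quotient.eq.1 h1)
    -- values on vertical and horizontal lines
    set g : k → Polynomial k := fun c => epsX c (rep (lineX c)) with hgdef
    set f' : k → Polynomial k := fun c' => epsY c' (rep (lineY c')) with hfdef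
    have F3 : ∀ c c' : k, (g c).eval c' = (f' c').eval c := by
      intro c c'
      have hprod : lineX c * lineY c' ≠ 0 :=
        mul_ne_zero (lineX_ne_zero c) (lineY_ne_zero c')
      obtain ⟨t1, ht1⟩ := KC _ _ (lineX_ne_zero c) hprod (dvd_mul_right _ _)
      obtain ⟨t2, ht2⟩ := KC _ _ (lineY_ne_zero c') hprod (dvd_mul_left _ _)
      have e1 : epsPt c c' (rep (lineX c * lineY c')) = (g c).eval c' := by
        have h5 := congrArg (epsPt c c') ht1
        rw [map_sub, map_mul] at h5
        have h6 : epsPt c c' (lineX c) = 0 := by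
          show ((epsX c) (lineX c)).eval c' = 0
          rw [epsX_lineX]; simp
        rw [h6, zero_mul, sub_eq_zero] at h5
        exact h5
      have e2 : epsPt c c' (rep (lineX c * lineY c')) = (f' c').eval c := by
        have h5 := congrArg (epsPt c c') ht2
        rw [map_sub, map_mul] at h5
        have h6 : epsPt c c' (lineY c') = 0 := by
          rw [epsPt_eq]
          show ((epsY c') (lineY c')).eval c = 0
          rw [epsY_lineY]; simp
        rw [h6, zero_mul, sub_eq_zero] at h5
        rw [h5, epsPt_eq]
        rfl
      rw [← e1, e2]
    obtain ⟨d, hS⟩ := pigeon_nat (fun c => (g c).natDegree)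
    obtain ⟨e, hT⟩ := pigeon_nat (fun c' => (f' c').natDegree)
    set S : Set k := {c | (g c).natDegree = d} with hSdef
    set T : Set k := {c' | (f' c').natDegree = e} with hTdef
    set M : ℕ := max d e with hMdef
    set u : ℕ → k := fun i => ((Set.Infinite.natEmbedding S hS) i : k) with hudef
    have huinj : Function.Injective u :=
      Subtype.val_injective.comp (Set.Infinite.natEmbedding S hS).injective
    have huS : ∀ i, u i ∈ S := fun i => ((Set.Infinite.natEmbedding S hS) i).2
    set ρ : Polynomial (Polynomial k) := lagPoly u (fun i => g (u i)) M with hρdef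
    set r : MvPolynomial (Fin 2) k := (eqX k).symm ρ with hrdef
    have hEr : eqX k r = ρ := (eqX k).apply_symm_apply ρ
    have hdegρ : ρ.natDegree ≤ M := natDegree_lagPoly_le _ _ _
    have F6a : ∀ c' ∈ T, ρ.map (Polynomial.evalRingHom c') = f' c' := by
      intro c' hc'
      have hdeg1 : (ρ.map (Polynomial.evalRingHom c')).natDegree ≤ M :=
        le_trans Polynomial.natDegree_map_le hdegρ
      have hdeg2 : (f' c').natDegree ≤ M := by
        rw [hTdef] at hc'
        rw [hc']
        exact le_max_right d e
      have hzero : ∀ i : Fin (M + 1),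
          (ρ.map (Polynomial.evalRingHom c') - f' c').eval (u i) = 0 := by
        intro i
        have hmem : (i : ℕ) ∈ Finset.range (M + 1) := by
          rw [Finset.mem_range]; exact i.2
        rw [Polynomial.eval_sub, eval_map_comm (u i) c' ρ,
          lagPoly_eval u huinj _ M i hmem, F3 (u i) c', sub_self]
      have hz : ρ.map (Polynomial.evalRingHom c') - f' c' = 0 := by
        refine Polynomial.eq_zero_of_natDegree_lt_card_of_eval_eq_zero _
          (f := fun i : Fin (M + 1) => u (i : ℕ))
          (huinj.comp Fin.val_injective) hzero ?_
        rw [Fintype.card_fin]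
        exact lt_of_le_of_lt (le_trans (Polynomial.natDegree_sub_le _ _)
          (max_le hdeg1 hdeg2)) (Nat.lt_succ_self M)
      exact sub_eq_zero.1 hz
    have F6b : ∀ c ∈ S, ρ.eval (Polynomial.C c) = g c := by
      intro c hc
      have hroots : ∀ c' ∈ T, (ρ.eval (Polynomial.C c) - g c).eval c' = 0 := by
        intro c' hc'
        rw [Polynomial.eval_sub, ← eval_map_comm c c' ρ, F6a c' hc',
          ← F3 c c', sub_self]
      have hz : ρ.eval (Polynomial.C c) - g c = 0 := by
        apply Polynomial.eq_zero_of_infinite_isRoot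
        apply Set.Infinite.mono _ hT
        intro c' hc'
        exact hroots c' hc'
      exact sub_eq_zero.1 hz
    have hgx : ∀ c ∈ S, lineX c ∣ r - rep (lineX c) := by
      intro c hc
      rw [← epsX_eq_zero_iff, map_sub]
      have h1 : epsX c r = ρ.eval (Polynomial.C c) := by
        show (eqX k r).eval (Polynomial.C c) = _
        rw [hEr]
      rw [h1, F6b c hc, hgdef, sub_self]
    have hgy : ∀ c' ∈ T, lineY c' ∣ r - rep (lineY c') := by
      intro c' hc'
      rw [← epsY_eq_zero_iff, map_sub]
      have h1 : epsY c' r = ρ.map (Polynomial.evalRingHom c') := by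
        rw [epsY_eq_map_comp]
        show Polynomial.map (Polynomial.evalRingHom c') (eqX k r) = _
        rw [hEr]
      rw [h1, F6a c' hc', hfdef, sub_self]
    -- all prime powers divide r - rep (p ^ n)
    have F9 : ∀ p : MvPolynomial (Fin 2) k, Prime p →
        ∀ n, p ^ n ∣ r - rep (p ^ n) := by
      intro p hp
      by_cases hq : (eqY k p).natDegree = 0
      · -- p is a polynomial in x alone
        set b0 : Polynomial k := (eqY k p).coeff 0 with hb0def
        have hb : eqY k p = Polynomial.C b0 := Polynomial.eq_C_of_natDegree_eq_zero hq
        have hepsYp : ∀ c', epsY c' p = b0 := by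
          intro c'
          show (eqY k p).eval (Polynomial.C c') = b0
          rw [hb, Polynomial.eval_C]
        have hb0 : b0 ≠ 0 := by
          intro h0
          apply hp.ne_zero
          apply (eqY k).injective
          rw [hb, h0, map_zero, map_zero]
        have hb0u : ¬IsUnit b0 := by
          intro hub
          apply hp.not_isUnit
          have h1 : IsUnit (eqY k p) := by rw [hb]; exact Polynomial.isUnit_C.2 hub
          have h2 := h1.map (eqY k).symm
          rwa [AlgEquiv.symm_apply_apply] at h2
        set v : ℕ → k := fun i => ((Set.Infinite.natEmbedding T hT) i : k) with hvdef
        have hvinj : Function.Injective v :=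
          Subtype.val_injective.comp (Set.Infinite.natEmbedding T hT).injective
        have hvT : ∀ i, v i ∈ T := fun i => ((Set.Infinite.natEmbedding T hT) i).2
        refine prime_pow_dvd_of_supply rep KC r p hp (fun i => lineY (v i))
          (fun i => lineY_ne_zero _) ?_ (fun i => hgy _ (hvT i)) ?_ ?_
        · intro i j hij
          exact lineY_isCoprime fun hvv => hij (hvinj hvv)
        · intro i h0
          obtain ⟨t, ht'⟩ :=
            Ideal.mem_span_singleton.1 (Ideal.Quotient.eq_zero_iff_mem.1 h0)
          have h5 := congrArg (epsY (v i)) ht'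
          rw [epsY_lineY, map_mul, hepsYp] at h5
          have htz : epsY (v i) t = 0 := by
            rcases mul_eq_zero.1 h5.symm with h6 | h6
            · exact absurd h6 hb0
            · exact h6
          obtain ⟨t', ht''⟩ := (epsY_eq_zero_iff _ _).1 htz
          rw [ht''] at ht'
          have h7 : lineY (v i) * 1 = lineY (v i) * (p * t') := by
            rw [mul_one]
            calc lineY (v i) = p * (lineY (v i) * t') := ht'
            _ = lineY (v i) * (p * t') := by ring
          have h8 := mul_left_cancel₀ (lineY_ne_zero (v i)) h7
          exact hp.not_isUnit (IsUnit.of_mul_eq_one (a := p) t' h8.symm)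
        · intro i hui
          obtain ⟨zq, hzq⟩ := hui.exists_right_inv
          obtain ⟨z, rfl⟩ := Ideal.Quotient.mk_surjective zq
          have h5 : lineY (v i) * z - 1 ∈ Ideal.span {p} := by
            apply Ideal.Quotient.eq.1
            rw [map_mul, map_one]
            exact hzq
          obtain ⟨aa, haa⟩ := Ideal.mem_span_singleton.1 h5
          have h6 := congrArg (epsY (v i)) haa
          rw [map_sub, map_mul, map_mul, map_one, epsY_lineY, zero_mul,
            zero_sub, hepsYp] at h6
          apply hb0u
          refine IsUnit.of_mul_eq_one (a := b0) (-(epsY (v i) aa)) ?_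
          rw [← neg_mul_comm, neg_mul, ← h6, neg_neg]
      · -- p genuinely involves y
        set q : Polynomial (Polynomial k) := eqY k p with hqdef
        have hq0 : q ≠ 0 := by
          intro h0
          apply hp.ne_zero
          apply (eqY k).injective
          rw [← hqdef, h0, map_zero]
        set j : ℕ := q.natDegree with hjdef
        have hj : 1 ≤ j := Nat.one_le_iff_ne_zero.2 hq
        set bj : Polynomial k := q.coeff j with hbjdef
        have hbj : bj ≠ 0 := by
          rw [hbjdef, hjdef]
          exact Polynomial.leadingCoeff_ne_zero.2 hq0
        have hfin : {c | bj.IsRoot c}.Finite := Polynomial.finite_setOf_isRoot hbj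
        have hS' : (S \ {c | bj.IsRoot c}).Infinite := hS.diff hfin
        set v : ℕ → k := fun i => ((Set.Infinite.natEmbedding _ hS') i : k) with hvdef
        have hvinj : Function.Injective v :=
          Subtype.val_injective.comp (Set.Infinite.natEmbedding _ hS').injective
        have hvS : ∀ i, v i ∈ S := fun i =>
          (((Set.Infinite.natEmbedding _ hS') i).2).1
        have hvykey : ∀ i, (epsX (v i) p).coeff j ≠ 0 := by
          intro i
          have h1 : epsX (v i) p = q.map (Polynomial.evalRingHom (v i)) := by
            rw [hqdef]
            rw [epsX_eq_map_comp]
            rfl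
          rw [h1, Polynomial.coeff_map]
          exact (((Set.Infinite.natEmbedding _ hS') i).2).2
        have hnz : ∀ i, epsX (v i) p ≠ 0 := by
          intro i h0
          apply hvykey i
          rw [h0, Polynomial.coeff_zero]
        have hnu : ∀ i, ¬IsUnit (epsX (v i) p) := by
          intro i hui
          obtain ⟨a, _, ha⟩ := Polynomial.isUnit_iff.1 hui
          apply hvykey i
          rw [← ha, Polynomial.coeff_C, if_neg (by omega)]
        refine prime_pow_dvd_of_supply rep KC r p hp (fun i => lineX (v i))
          (fun i => lineX_ne_zero _) ?_ (fun i => hgx _ (hvS i)) ?_ ?_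
        · intro i j' hij
          exact lineX_isCoprime fun hvv => hij (hvinj hvv)
        · intro i h0
          obtain ⟨t, ht'⟩ :=
            Ideal.mem_span_singleton.1 (Ideal.Quotient.eq_zero_iff_mem.1 h0)
          have h5 := congrArg (epsX (v i)) ht'
          rw [epsX_lineX, map_mul] at h5
          have htz : epsX (v i) t = 0 := by
            rcases mul_eq_zero.1 h5.symm with h6 | h6
            · exact absurd h6 (hnz i)
            · exact h6
          obtain ⟨t', ht''⟩ := (epsX_eq_zero_iff _ _).1 htz
          rw [ht''] at ht'
          have h7 : lineX (v i) * 1 = lineX (v i) * (p * t') := by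
            rw [mul_one]
            calc lineX (v i) = p * (lineX (v i) * t') := ht'
            _ = lineX (v i) * (p * t') := by ring
          have h8 := mul_left_cancel₀ (lineX_ne_zero (v i)) h7
          exact hp.not_isUnit (IsUnit.of_mul_eq_one (a := p) t' h8.symm)
        · intro i hui
          obtain ⟨zq, hzq⟩ := hui.exists_right_inv
          obtain ⟨z, rfl⟩ := Ideal.Quotient.mk_surjective zq
          have h5 : lineX (v i) * z - 1 ∈ Ideal.span {p} := by
            apply Ideal.Quotient.eq.1
            rw [map_mul, map_one]
            exact hzq
          obtain ⟨aa, haa⟩ := Ideal.mem_span_singleton.1 h5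
          have h6 := congrArg (epsX (v i)) haa
          rw [map_sub, map_mul, map_mul, map_one, epsX_lineX, zero_mul,
            zero_sub] at h6
          apply hnu i
          refine IsUnit.of_mul_eq_one (-(epsX (v i) aa)) ?_
          rw [← neg_mul_comm, neg_mul, ← h6, neg_neg]
    -- conclude
    refine ⟨r, ?_⟩
    intro a
    obtain ⟨f0, hf0a, hf00⟩ := Submodule.exists_mem_ne_zero_of_ne_bot a.2
    have hfr : f0 ∣ r - rep f0 := by
      refine dvd_of_forall_prime_pow_dvd _ f0 hf00 ?_
      intro p n hp hdvd
      have h1 := F9 p hp n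
      have hpn : p ^ n ≠ 0 := pow_ne_zero _ hp.ne_zero
      have h2 : p ^ n ∣ rep f0 - rep (p ^ n) := KC _ _ hpn hf00 hdvd
      have h3 : r - rep f0 = (r - rep (p ^ n)) - (rep f0 - rep (p ^ n)) := by ring
      rw [h3]
      exact dvd_sub h1 h2
    have hmk : Ideal.Quotient.mk (Ideal.span {f0}) r
        = x ⟨Ideal.span {f0}, hker f0 hf00⟩ := by
      rw [← hrep f0 hf00]
      exact Ideal.Quotient.eq.2 (Ideal.mem_span_singleton.2 hfr)
    have hle : Ideal.span {f0} ≤ a.1 := (Ideal.span_singleton_le_iff_mem _).2 hf0a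
    have h1 := hx ⟨Ideal.span {f0}, hker f0 hf00⟩ a hle
    rw [← hmk, Ideal.Quotient.factor_mk] at h1
    exact h1
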